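/- Let n₁, n₂ be positive integers with n₁ ≡ n₂ ≡ 1 mod 4, and let q be a positive integer with q ≡ 3 mod 4. Then √q does not lie in the field ℚ(√n₁, √n₂). -/

import Mathlib

set_option maxHeartbeats 1000000

private lemma not_sq_of_mod4 (k : ℕ) (hk : k % 4 = 3) (r : ℚ) : r ^ 2 ≠ (k : ℚ) := by
  intro h
  have hs : IsSquare (k : ℚ) := ⟨r, by rw [← h]; ring⟩
  rw [Rat.isSquare_natCast_iff] at hs
  obtain ⟨t, rfl⟩ := hs
  have h1 : (t * t) % 4 = (t % 4) * (t % 4) % 4 := Nat.mul_mod t t 4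
  have h2 : t % 4 < 4 := Nat.mod_lt _ (by norm_num)
  interval_cases h : t % 4 <;> omega

private lemma lin_indep2 {s : ℝ} (hs : Irrational s) {α β : ℚ}
    (h : (α : ℝ) + β * s = 0) : α = 0 ∧ β = 0 := by
  by_cases hb : β = 0
  · subst hb; simp at h; exact ⟨by exact_mod_cast h, rfl⟩
  · exfalso
    apply hs
    refine ⟨-α / β, ?_⟩
    have hb' : (β : ℝ) ≠ 0 := by exact_mod_cast hb
    push_cast
    field_simp
    linarith

private lemma sqrt_eq_abs_of_sq {k : ℕ} {r : ℚ} (h : (r : ℝ) ^ 2 = (k : ℝ)) :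
    ((|r| : ℚ) : ℝ) = Real.sqrt k := by
  rw [← h, Real.sqrt_sq_eq_abs]
  push_cast
  rfl

/-- ℚ(√m) as a subfield of ℝ. -/
private noncomputable def Qadj (m : ℕ) : Subfield ℝ where
  carrier := {x | ∃ a b : ℚ, x = (a : ℝ) + (b : ℝ) * Real.sqrt m}
  zero_mem' := ⟨0, 0, by simp⟩
  one_mem' := ⟨1, 0, by simp⟩
  add_mem' := by
    rintro x y ⟨a, b, rfl⟩ ⟨c, d, rfl⟩
    exact ⟨a + c, b + d, by push_cast; ring⟩
  neg_mem' := by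
    rintro x ⟨a, b, rfl⟩
    exact ⟨-a, -b, by push_cast; ring⟩
  mul_mem' := by
    rintro x y ⟨a, b, rfl⟩ ⟨c, d, rfl⟩
    have hm : Real.sqrt m ^ 2 = (m : ℝ) := Real.sq_sqrt (Nat.cast_nonneg m)
    exact ⟨a * c + b * d * m, a * d + b * c, by push_cast; linear_combination ((b:ℝ) * d) * hm⟩
  inv_mem' := by
    intro x hx
    obtain ⟨a, b, rfl⟩ := hx
    have hm : Real.sqrt m ^ 2 = (m : ℝ) := Real.sq_sqrt (Nat.cast_nonneg m)
    by_cases hx0 : (a : ℝ) + (b : ℝ) * Real.sqrt m = 0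
    · rw [hx0]; exact ⟨0, 0, by simp⟩
    by_cases hi : Irrational (Real.sqrt m)
    · have hD : a ^ 2 - b ^ 2 * m ≠ 0 := by
        intro hD
        have hDR : (a : ℝ) ^ 2 - (b : ℝ) ^ 2 * m = 0 := by exact_mod_cast congrArg (Rat.cast (K := ℝ)) hD
        by_cases hb : (b : ℝ) = 0
        · have ha2 : (a : ℝ) ^ 2 = 0 := by rw [hb] at hDR; linarith
          have ha : (a : ℝ) = 0 := sq_eq_zero_iff.mp ha2
          exact hx0 (by rw [ha, hb]; ring)
        · apply hi
          refine ⟨|a / b|, ?_⟩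
          have hab : ((a : ℝ) / b) ^ 2 = (m : ℝ) := by
            field_simp
            linarith [hDR]
          have h2 : Real.sqrt m = |(a : ℝ) / b| := by
            rw [← hab, Real.sqrt_sq_eq_abs]
          rw [h2]
          push_cast [abs_div]
          rfl
      refine ⟨a / (a ^ 2 - b ^ 2 * m), -b / (a ^ 2 - b ^ 2 * m), ?_⟩
      have hDR : (a : ℝ) ^ 2 - (b : ℝ) ^ 2 * m ≠ 0 := by
        intro h; apply hD; exact_mod_cast h
      apply inv_eq_of_mul_eq_one_right
      push_cast
      field_simp
      ring_nf
      linear_combination (-(b:ℝ)^2) * hm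
    · rw [Irrational, not_not] at hi
      obtain ⟨r, hr⟩ := hi
      refine ⟨(a + b * r)⁻¹, 0, ?_⟩
      rw [← hr]
      push_cast
      ring

private lemma sqrt_not_quadratic (q m : ℕ) (hq : q % 4 = 3) (hm : m % 4 = 1) (a b : ℚ)
    (h : Real.sqrt q = (a : ℝ) + (b : ℝ) * Real.sqrt m) : False := by
  have hq2 : Real.sqrt q ^ 2 = (q : ℝ) := Real.sq_sqrt (Nat.cast_nonneg q)
  have hm2 : Real.sqrt m ^ 2 = (m : ℝ) := Real.sq_sqrt (Nat.cast_nonneg m)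
  by_cases hi : Irrational (Real.sqrt m)
  · have key : ((a ^ 2 + b ^ 2 * m - q : ℚ) : ℝ) + ((2 * a * b : ℚ) : ℝ) * Real.sqrt m = 0 := by
      push_cast
      linear_combination (-(b : ℝ) ^ 2) * hm2 + hq2 - ((a : ℝ) + (b : ℝ) * Real.sqrt m + Real.sqrt q) * h
    obtain ⟨hα, hβ⟩ := lin_indep2 hi key
    have hab : a = 0 ∨ b = 0 := by
      rcases mul_eq_zero.mp (by linarith [hβ] : (2 * a) * b = 0) with h' | h'
      · left; rcases mul_eq_zero.mp h' with h'' | h''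
        · norm_num at h''
        · exact h''
      · right; exact h'
    rcases hab with ha | hb
    · apply not_sq_of_mod4 (q * m) ?_ (b * m)
      · push_cast
        rw [ha] at hα
        nlinarith [hα]
      · rw [Nat.mul_mod, hq, hm]
    · apply not_sq_of_mod4 q hq a
      rw [hb] at hα
      nlinarith [hα]
  · rw [Irrational, not_not] at hi
    obtain ⟨r, hr⟩ := hi
    apply not_sq_of_mod4 q hq (a + b * r)
    have : ((a + b * r : ℚ) : ℝ) ^ 2 = (q : ℝ) := by
      rw [← hq2, h, ← hr]; push_cast; ring
    exact_mod_cast this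

private lemma lin_indep4 {n₁ n₂ : ℕ}
    (i1 : Irrational (Real.sqrt n₁)) (i2 : Irrational (Real.sqrt n₂))
    (i12 : Irrational (Real.sqrt n₁ * Real.sqrt n₂)) {a b c d : ℚ}
    (h : (a : ℝ) + b * Real.sqrt n₁ + c * Real.sqrt n₂ + d * (Real.sqrt n₁ * Real.sqrt n₂) = 0) :
    a = 0 ∧ b = 0 ∧ c = 0 ∧ d = 0 := by
  have hs : Real.sqrt n₁ ^ 2 = (n₁ : ℝ) := Real.sq_sqrt (Nat.cast_nonneg _)
  have ht : Real.sqrt n₂ ^ 2 = (n₂ : ℝ) := Real.sq_sqrt (Nat.cast_nonneg _)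
  by_cases hcd : (c : ℝ) + d * Real.sqrt n₁ = 0
  · obtain ⟨hc, hd⟩ := lin_indep2 i1 hcd
    have h' : (a : ℝ) + b * Real.sqrt n₁ = 0 := by
      rw [hc, hd] at h; push_cast at h; linarith
    obtain ⟨ha, hb⟩ := lin_indep2 i1 h'
    exact ⟨ha, hb, hc, hd⟩
  · exfalso
    have hD : c ^ 2 - d ^ 2 * (n₁ : ℚ) ≠ 0 := by
      intro h0
      have h0R : (c : ℝ) ^ 2 - (d : ℝ) ^ 2 * n₁ = 0 := by exact_mod_cast congrArg (Rat.cast (K := ℝ)) h0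
      by_cases hd : (d : ℝ) = 0
      · have hc2 : (c : ℝ) ^ 2 = 0 := by rw [hd] at h0R; linarith
        exact hcd (by rw [sq_eq_zero_iff.mp hc2, hd]; ring)
      · apply i1
        have hdq : d ≠ 0 := fun h' => hd (by exact_mod_cast h')
        refine ⟨|c / d|, sqrt_eq_abs_of_sq ?_⟩
        push_cast
        field_simp
        linarith [h0R]
    have hDR : ((c ^ 2 - d ^ 2 * (n₁ : ℚ) : ℚ) : ℝ) ≠ 0 := fun h' => hD (by exact_mod_cast h')
    have hDt : ((c ^ 2 - d ^ 2 * (n₁ : ℚ) : ℚ) : ℝ) * Real.sqrt n₂ =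
        ((b * d * n₁ - a * c : ℚ) : ℝ) + ((a * d - b * c : ℚ) : ℝ) * Real.sqrt n₁ := by
      push_cast
      linear_combination ((c : ℝ) - d * Real.sqrt n₁) * h + ((b : ℝ) * d + d ^ 2 * Real.sqrt n₂) * hs
    set u : ℚ := b * d * (n₁ : ℚ) - a * c with hu'
    set v : ℚ := a * d - b * c with hv'
    set D : ℚ := c ^ 2 - d ^ 2 * (n₁ : ℚ) with hD'
    have key2 : ((u ^ 2 + v ^ 2 * (n₁ : ℚ) - D ^ 2 * (n₂ : ℚ) : ℚ) : ℝ) +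
        ((2 * u * v : ℚ) : ℝ) * Real.sqrt n₁ = 0 := by
      push_cast
      linear_combination (-((D : ℝ) * Real.sqrt n₂ + u + v * Real.sqrt n₁)) * hDt
        - (v : ℝ) ^ 2 * hs + (D : ℝ) ^ 2 * ht
    obtain ⟨k1, k2⟩ := lin_indep2 i1 key2
    by_cases hv : v = 0
    · apply i2
      refine ⟨|u / D|, sqrt_eq_abs_of_sq ?_⟩
      have : u ^ 2 = D ^ 2 * (n₂ : ℚ) := by rw [hv] at k1; linarith
      push_cast
      field_simp
      rw [mul_comm] at this
      exact_mod_cast this.trans (mul_comm _ _)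
    · have hu : u = 0 := by
        rcases mul_eq_zero.mp (by linarith : (2 * u) * v = 0) with h' | h'
        · rcases mul_eq_zero.mp h' with h'' | h''
          · norm_num at h''
          · exact h''
        · exact absurd h' hv
      apply i12
      refine ⟨v * n₁ / D, ?_⟩
      have huR : ((u : ℚ) : ℝ) = 0 := by exact_mod_cast hu
      have hst : (D : ℝ) * (Real.sqrt n₁ * Real.sqrt n₂) = (v : ℝ) * (n₁ : ℝ) := by
        linear_combination Real.sqrt n₁ * hDt + (v : ℝ) * hs + Real.sqrt n₁ * huR
      push_cast
      field_simp
      linear_combination -hst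

private lemma mul_form (n₁ n₂ : ℕ) (a b c d e f g k : ℚ) :
    ((a : ℝ) + b * Real.sqrt n₁ + c * Real.sqrt n₂ + d * (Real.sqrt n₁ * Real.sqrt n₂)) *
    ((e : ℝ) + f * Real.sqrt n₁ + g * Real.sqrt n₂ + k * (Real.sqrt n₁ * Real.sqrt n₂)) =
    ((a * e + b * f * n₁ + c * g * n₂ + d * k * (n₁ * n₂) : ℚ) : ℝ)
    + ((a * f + b * e + c * k * n₂ + d * g * n₂ : ℚ) : ℝ) * Real.sqrt n₁
    + ((a * g + c * e + b * k * n₁ + d * f * n₁ : ℚ) : ℝ) * Real.sqrt n₂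
    + ((a * k + d * e + b * g + c * f : ℚ) : ℝ) * (Real.sqrt n₁ * Real.sqrt n₂) := by
  have hs : Real.sqrt n₁ ^ 2 = (n₁ : ℝ) := Real.sq_sqrt (Nat.cast_nonneg _)
  have ht : Real.sqrt n₂ ^ 2 = (n₂ : ℝ) := Real.sq_sqrt (Nat.cast_nonneg _)
  push_cast
  linear_combination ((b : ℝ) * f + (b * k + d * f) * Real.sqrt n₂ + d * k * Real.sqrt n₂ ^ 2) * hs
    + ((c : ℝ) * g + (c * k + d * g) * Real.sqrt n₁ + d * k * (n₁ : ℝ)) * ht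

/-- ℚ(√n₁, √n₂) as a subfield of ℝ, in the generic (biquadratic) case. -/
private noncomputable def Qadj2 (n₁ n₂ : ℕ)
    (i1 : Irrational (Real.sqrt n₁)) (i2 : Irrational (Real.sqrt n₂))
    (i12 : Irrational (Real.sqrt n₁ * Real.sqrt n₂)) : Subfield ℝ where
  carrier := {x | ∃ a b c d : ℚ, x = (a : ℝ) + b * Real.sqrt n₁ + c * Real.sqrt n₂
    + d * (Real.sqrt n₁ * Real.sqrt n₂)}
  zero_mem' := ⟨0, 0, 0, 0, by simp⟩
  one_mem' := ⟨1, 0, 0, 0, by simp⟩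
  add_mem' := by
    rintro x y ⟨a, b, c, d, rfl⟩ ⟨e, f, g, k, rfl⟩
    exact ⟨a + e, b + f, c + g, d + k, by push_cast; ring⟩
  neg_mem' := by
    rintro x ⟨a, b, c, d, rfl⟩
    exact ⟨-a, -b, -c, -d, by push_cast; ring⟩
  mul_mem' := by
    rintro x y ⟨a, b, c, d, rfl⟩ ⟨e, f, g, k, rfl⟩
    exact ⟨_, _, _, _, mul_form n₁ n₂ a b c d e f g k⟩
  inv_mem' := by
    intro x hx
    obtain ⟨a, b, c, d, rfl⟩ := hx
    have hs : Real.sqrt n₁ ^ 2 = (n₁ : ℝ) := Real.sq_sqrt (Nat.cast_nonneg _)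
    have ht : Real.sqrt n₂ ^ 2 = (n₂ : ℝ) := Real.sq_sqrt (Nat.cast_nonneg _)
    set x := (a : ℝ) + b * Real.sqrt n₁ + c * Real.sqrt n₂
      + d * (Real.sqrt n₁ * Real.sqrt n₂) with hx'
    by_cases hx0 : x = 0
    · rw [hx0]; exact ⟨0, 0, 0, 0, by simp⟩
    set A : ℚ := a ^ 2 + c ^ 2 * n₂ - b ^ 2 * n₁ - d ^ 2 * (n₁ * n₂) with hA'
    set B : ℚ := 2 * (a * c - b * d * n₁) with hB'
    have fact1 : x * ((a : ℝ) - b * Real.sqrt n₁ + c * Real.sqrt n₂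
        - d * (Real.sqrt n₁ * Real.sqrt n₂)) = (A : ℝ) + (B : ℝ) * Real.sqrt n₂ := by
      rw [hx', hA', hB']
      push_cast
      linear_combination (-((b : ℝ) + d * Real.sqrt n₂) ^ 2) * hs
        + ((c : ℝ) ^ 2 - d ^ 2 * n₁) * ht
    have hD : A ^ 2 - B ^ 2 * (n₂ : ℚ) ≠ 0 := by
      intro h0
      have h0R : (A : ℝ) ^ 2 - (B : ℝ) ^ 2 * n₂ = 0 := by exact_mod_cast congrArg (Rat.cast (K := ℝ)) h0
      have hAB : (A : ℝ) + (B : ℝ) * Real.sqrt n₂ = 0 := by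
        by_cases hB : (B : ℝ) = 0
        · have : (A : ℝ) ^ 2 = 0 := by rw [hB] at h0R; linarith
          rw [hB, sq_eq_zero_iff.mp this]; ring
        · exfalso
          apply i2
          refine ⟨|A / B|, sqrt_eq_abs_of_sq ?_⟩
          push_cast
          field_simp
          linarith [h0R]
      have hconj : ((a : ℝ)) - b * Real.sqrt n₁ + c * Real.sqrt n₂
          - d * (Real.sqrt n₁ * Real.sqrt n₂) = 0 := by
        rcases mul_eq_zero.mp (by rw [fact1, hAB] : x * ((a : ℝ) - b * Real.sqrt n₁
          + c * Real.sqrt n₂ - d * (Real.sqrt n₁ * Real.sqrt n₂)) = 0) with h' | h'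
        · exact absurd h' hx0
        · exact h'
      have hconj' : ((a : ℝ)) + ((-b : ℚ) : ℝ) * Real.sqrt n₁ + c * Real.sqrt n₂
          + ((-d : ℚ) : ℝ) * (Real.sqrt n₁ * Real.sqrt n₂) = 0 := by push_cast; linarith [hconj]
      obtain ⟨ha, hb, hc, hd⟩ := lin_indep4 i1 i2 i12 hconj'
      apply hx0
      rw [hx', ha, neg_eq_zero.mp hb, hc, neg_eq_zero.mp hd]
      push_cast
      ring
    have hDR : ((A ^ 2 - B ^ 2 * (n₂ : ℚ) : ℚ) : ℝ) ≠ 0 := fun h' => hD (by exact_mod_cast h')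
    set Dq : ℚ := A ^ 2 - B ^ 2 * (n₂ : ℚ) with hDq'
    have fact3 : ((a : ℝ) - b * Real.sqrt n₁ + c * Real.sqrt n₂
        - d * (Real.sqrt n₁ * Real.sqrt n₂)) * ((A : ℝ) - (B : ℝ) * Real.sqrt n₂) =
        ((a * A - c * B * n₂ : ℚ) : ℝ) + ((d * B * n₂ - b * A : ℚ) : ℝ) * Real.sqrt n₁
        + ((c * A - a * B : ℚ) : ℝ) * Real.sqrt n₂
        + ((b * B - d * A : ℚ) : ℝ) * (Real.sqrt n₁ * Real.sqrt n₂) := by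
      push_cast
      linear_combination ((-(c : ℝ)) * B + d * B * Real.sqrt n₁) * ht
    have fact2 : ((A : ℝ) + (B : ℝ) * Real.sqrt n₂) * ((A : ℝ) - (B : ℝ) * Real.sqrt n₂)
        = (Dq : ℝ) := by
      rw [hDq']
      push_cast
      linear_combination (-(B : ℝ) ^ 2) * ht
    refine ⟨(a * A - c * B * n₂) / Dq, (d * B * n₂ - b * A) / Dq,
      (c * A - a * B) / Dq, (b * B - d * A) / Dq, ?_⟩
    have key : x * (((a * A - c * B * n₂) / Dq : ℚ) + ((d * B * n₂ - b * A) / Dq : ℚ) * Real.sqrt n₁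
        + ((c * A - a * B) / Dq : ℚ) * Real.sqrt n₂
        + ((b * B - d * A) / Dq : ℚ) * (Real.sqrt n₁ * Real.sqrt n₂)) = 1 := by
      have expand : (((a * A - c * B * n₂) / Dq : ℚ) : ℝ) + (((d * B * n₂ - b * A) / Dq : ℚ) : ℝ) * Real.sqrt n₁
          + (((c * A - a * B) / Dq : ℚ) : ℝ) * Real.sqrt n₂
          + (((b * B - d * A) / Dq : ℚ) : ℝ) * (Real.sqrt n₁ * Real.sqrt n₂)
          = (((a : ℝ) - b * Real.sqrt n₁ + c * Real.sqrt n₂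
            - d * (Real.sqrt n₁ * Real.sqrt n₂)) * ((A : ℝ) - (B : ℝ) * Real.sqrt n₂)) / (Dq : ℝ) := by
        rw [fact3]
        push_cast
        field_simp
      rw [expand, mul_div_assoc', ← mul_assoc, fact1, fact2, div_self hDR]
    exact (inv_eq_of_mul_eq_one_right key)

/-- If n₁ ≡ n₂ ≡ 1 mod 4 are positive integers and q ≡ 3 mod 4 is a positive
    integer, then √q ∉ ℚ(√n₁, √n₂). -/
theorem stmt8 (n₁ n₂ q : ℕ) (hn₁ : 0 < n₁) (hn₂ : 0 < n₂) (hq : 0 < q)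
    (h₁ : n₁ % 4 = 1) (h₂ : n₂ % 4 = 1) (h₃ : q % 4 = 3) :
    Real.sqrt q ∉ Subfield.closure ({Real.sqrt n₁, Real.sqrt n₂} : Set ℝ) := by
  intro hmem
  have hq2 : Real.sqrt q ^ 2 = (q : ℝ) := Real.sq_sqrt (Nat.cast_nonneg _)
  have hs : Real.sqrt n₁ ^ 2 = (n₁ : ℝ) := Real.sq_sqrt (Nat.cast_nonneg _)
  have ht : Real.sqrt n₂ ^ 2 = (n₂ : ℝ) := Real.sq_sqrt (Nat.cast_nonneg _)
  have hn₁Q : (n₁ : ℚ) ≠ 0 := by exact_mod_cast hn₁.ne'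
  have hn₂Q : (n₂ : ℚ) ≠ 0 := by exact_mod_cast hn₂.ne'
  by_cases i1 : Irrational (Real.sqrt n₁)
  · by_cases i2 : Irrational (Real.sqrt n₂)
    · by_cases i12 : Irrational (Real.sqrt n₁ * Real.sqrt n₂)
      · -- generic biquadratic case
        have hle : Subfield.closure ({Real.sqrt n₁, Real.sqrt n₂} : Set ℝ)
            ≤ Qadj2 n₁ n₂ i1 i2 i12 := by
          rw [Subfield.closure_le]
          intro x hx
          simp only [Set.mem_insert_iff, Set.mem_singleton_iff] at hx
          rcases hx with rfl | rfl
          · exact ⟨0, 1, 0, 0, by push_cast; ring⟩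
          · exact ⟨0, 0, 1, 0, by push_cast; ring⟩
        obtain ⟨a, b, c, d, h⟩ := hle hmem
        have key : ((a ^ 2 + b ^ 2 * n₁ + c ^ 2 * n₂ + d ^ 2 * (n₁ * n₂) - q : ℚ) : ℝ)
            + ((2 * (a * b + c * d * n₂) : ℚ) : ℝ) * Real.sqrt n₁
            + ((2 * (a * c + b * d * n₁) : ℚ) : ℝ) * Real.sqrt n₂
            + ((2 * (a * d + b * c) : ℚ) : ℝ) * (Real.sqrt n₁ * Real.sqrt n₂) = 0 := by
          push_cast
          linear_combination hq2 - (Real.sqrt q + ((a : ℝ) + b * Real.sqrt n₁ + c * Real.sqrt n₂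
              + d * (Real.sqrt n₁ * Real.sqrt n₂))) * h
            - ((b : ℝ) ^ 2 + 2 * b * d * Real.sqrt n₂ + d ^ 2 * Real.sqrt n₂ ^ 2) * hs
            - ((c : ℝ) ^ 2 + d ^ 2 * (n₁ : ℝ) + 2 * c * d * Real.sqrt n₁) * ht
        obtain ⟨hP, hQ, hR, hT⟩ := lin_indep4 i1 i2 i12 key
        have hP' : a ^ 2 + b ^ 2 * (n₁ : ℚ) + c ^ 2 * (n₂ : ℚ) + d ^ 2 * ((n₁ : ℚ) * n₂) = (q : ℚ) := by
          push_cast at hP ⊢; linarith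
        have hQ' : a * b + c * d * (n₂ : ℚ) = 0 := by
          push_cast at hQ; linarith
        have hR' : a * c + b * d * (n₁ : ℚ) = 0 := by
          push_cast at hR; linarith
        have hT' : a * d + b * c = 0 := by
          push_cast at hT; linarith
        -- first show b * c = 0
        have hbc : b * c = 0 := by
          by_contra hbc
          have h1 : b * c * (a ^ 2 - d ^ 2 * ((n₁ : ℚ) * n₂)) = 0 := by
            linear_combination (a * c) * hQ' - (c * d * (n₂ : ℚ)) * hR'
          have h2 : a ^ 2 = d ^ 2 * ((n₁ : ℚ) * n₂) := by
            rcases mul_eq_zero.mp h1 with h' | h'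
            · exact absurd h' hbc
            · linarith
          by_cases hd : d = 0
          · have ha : a = 0 := by
              rw [hd] at h2
              have : a ^ 2 = 0 := by rw [h2]; ring
              exact pow_eq_zero_iff (by norm_num) |>.mp this
            rw [ha, hd] at hT'
            apply hbc
            linarith
          · apply i12
            have hdR : (d : ℝ) ≠ 0 := by exact_mod_cast hd
            have habs : ((a / d : ℚ) : ℝ) ^ 2 = ((n₁ * n₂ : ℕ) : ℝ) := by
              push_cast
              field_simp
              push_cast
              have h2R : (a : ℝ) ^ 2 = (d : ℝ) ^ 2 * ((n₁ : ℝ) * n₂) := by exact_mod_cast h2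
              linear_combination h2R
            have h12 : Real.sqrt n₁ * Real.sqrt n₂ = Real.sqrt (n₁ * n₂ : ℕ) := by
              push_cast
              rw [← Real.sqrt_mul (Nat.cast_nonneg _)]
            rw [h12]
            exact ⟨|a / d|, sqrt_eq_abs_of_sq habs⟩
        -- now case on which coefficients vanish
        have hq0 : (a, b, c, d) ≠ (0, 0, 0, 0) := by
          intro h0
          simp only [Prod.mk.injEq] at h0
          obtain ⟨ha, hb, hc, hd⟩ := h0
          rw [ha, hb, hc, hd] at hP'
          have : (q : ℚ) = 0 := by linarith
          have : q = 0 := by exact_mod_cast this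
          omega
        rcases mul_eq_zero.mp hbc with hb | hc
        · -- b = 0
          by_cases hc0 : c = 0
          · by_cases ha0 : a = 0
            · -- only d can be nonzero : q = d² n₁ n₂
              apply not_sq_of_mod4 (q * (n₁ * n₂)) ?_ (d * (n₁ * n₂))
              · push_cast
                rw [hb, hc0, ha0] at hP'
                linear_combination ((n₁ : ℚ) * (n₂ : ℚ)) * hP'
              · simp [Nat.mul_mod, h₁, h₂, h₃]
            · -- a ≠ 0 : from hT', d = 0, so q = a²
              have hd0 : d = 0 := by
                rcases mul_eq_zero.mp (by rw [hb, hc0] at hT'; linarith : a * d = 0) with h' | h'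
                · exact absurd h' ha0
                · exact h'
              apply not_sq_of_mod4 q h₃ a
              rw [hb, hc0, hd0] at hP'
              linear_combination hP'
          · -- c ≠ 0 : d = 0 from hQ', a = 0 from hR', q = c² n₂
            have hd0 : d = 0 := by
              rcases mul_eq_zero.mp (by rw [hb] at hQ'; linarith : (c * d) * (n₂ : ℚ) = 0) with h' | h'
              · rcases mul_eq_zero.mp h' with h'' | h''
                · exact absurd h'' hc0
                · exact h''
              · exact absurd h' hn₂Q
            have ha0 : a = 0 := by
              rcases mul_eq_zero.mp (by rw [hb, hd0] at hR'; linarith : a * c = 0) with h' | h'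
              · exact h'
              · exact absurd h' hc0
            apply not_sq_of_mod4 (q * n₂) ?_ (c * n₂)
            · push_cast
              rw [hb, ha0, hd0] at hP'
              linear_combination (n₂ : ℚ) * hP'
            · rw [Nat.mul_mod, h₃, h₂]
        · -- c = 0
          by_cases hb0 : b = 0
          · by_cases ha0 : a = 0
            · apply not_sq_of_mod4 (q * (n₁ * n₂)) ?_ (d * (n₁ * n₂))
              · push_cast
                rw [hb0, hc, ha0] at hP'
                linear_combination ((n₁ : ℚ) * (n₂ : ℚ)) * hP'
              · simp [Nat.mul_mod, h₁, h₂, h₃]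
            · have hd0 : d = 0 := by
                rcases mul_eq_zero.mp (by rw [hb0, hc] at hT'; linarith : a * d = 0) with h' | h'
                · exact absurd h' ha0
                · exact h'
              apply not_sq_of_mod4 q h₃ a
              rw [hb0, hc, hd0] at hP'
              linear_combination hP'
          · -- b ≠ 0 : a = 0 from hQ', d = 0 from hR', q = b² n₁
            have ha0 : a = 0 := by
              rcases mul_eq_zero.mp (by rw [hc] at hQ'; linarith : a * b = 0) with h' | h'
              · exact h'
              · exact absurd h' hb0
            have hd0 : d = 0 := by
              rcases mul_eq_zero.mp (by rw [hc, ha0] at hR'; linarith : (b * d) * (n₁ : ℚ) = 0) with h' | h'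
              · rcases mul_eq_zero.mp h' with h'' | h''
                · exact absurd h'' hb0
                · exact h''
              · exact absurd h' hn₁Q
            apply not_sq_of_mod4 (q * n₁) ?_ (b * n₁)
            · push_cast
              rw [hc, ha0, hd0] at hP'
              linear_combination (n₁ : ℚ) * hP'
            · rw [Nat.mul_mod, h₃, h₁]
      · -- √n₁ √n₂ rational : closure ⊆ ℚ(√n₁)
        rw [Irrational, not_not] at i12
        obtain ⟨r, hr⟩ := i12
        have hn₁R : (n₁ : ℝ) ≠ 0 := by exact_mod_cast hn₁.ne'
        have hle : Subfield.closure ({Real.sqrt n₁, Real.sqrt n₂} : Set ℝ) ≤ Qadj n₁ := by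
          rw [Subfield.closure_le]
          intro x hx
          simp only [Set.mem_insert_iff, Set.mem_singleton_iff] at hx
          rcases hx with rfl | rfl
          · exact ⟨0, 1, by push_cast; ring⟩
          · refine ⟨0, r / n₁, ?_⟩
            push_cast
            field_simp
            linear_combination (-Real.sqrt n₁) * hr - Real.sqrt n₂ * hs
        obtain ⟨a, b, hab⟩ := hle hmem
        exact sqrt_not_quadratic q n₁ h₃ h₁ a b hab
    · -- √n₂ rational : closure ⊆ ℚ(√n₁)
      rw [Irrational, not_not] at i2
      obtain ⟨r, hr⟩ := i2
      have hle : Subfield.closure ({Real.sqrt n₁, Real.sqrt n₂} : Set ℝ) ≤ Qadj n₁ := by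
        rw [Subfield.closure_le]
        intro x hx
        simp only [Set.mem_insert_iff, Set.mem_singleton_iff] at hx
        rcases hx with rfl | rfl
        · exact ⟨0, 1, by push_cast; ring⟩
        · exact ⟨r, 0, by rw [← hr]; push_cast; ring⟩
      obtain ⟨a, b, hab⟩ := hle hmem
      exact sqrt_not_quadratic q n₁ h₃ h₁ a b hab
  · -- √n₁ rational : closure ⊆ ℚ(√n₂)
    rw [Irrational, not_not] at i1
    obtain ⟨r, hr⟩ := i1
    have hle : Subfield.closure ({Real.sqrt n₁, Real.sqrt n₂} : Set ℝ) ≤ Qadj n₂ := by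
      rw [Subfield.closure_le]
      intro x hx
      simp only [Set.mem_insert_iff, Set.mem_singleton_iff] at hx
      rcases hx with rfl | rfl
      · exact ⟨r, 0, by rw [← hr]; push_cast; ring⟩
      · exact ⟨0, 1, by push_cast; ring⟩
    obtain ⟨a, b, hab⟩ := hle hmem
    exact sqrt_not_quadratic q n₂ h₃ h₂ a b hab
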